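/- Let Γ be a simplicial complex with Γ = Δ_d(Γ^{[d]}), and let Ω be an orientably-vertex-minimal d-dimensional cycle in Γ^{[d]} that is not d-complete, with vertex set W = V(Ω). Then the induced subcomplex Γ_W has dimension d, i.e. Γ_W contains no face of cardinality greater than d+1. -/

import Mathlib

open Finset

namespace ChordedPaper

variable {V : Type*} [DecidableEq V] [Fintype V]

/-- A simplicial complex: a set of finsets (faces) closed under taking subsets.
(The vertices of the complex are the vertices of its faces, so all singletons of
vertices are automatically faces.) -/
def IsComplex (K : Set (Finset V)) : Prop :=
  ∀ F ∈ K, ∀ G ⊆ F, G ∈ K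

/-- The vertex set `V(K)` of a complex. -/
def verts (K : Set (Finset V)) : Set V :=
  {v | ∃ F ∈ K, v ∈ F}

/-- The `d`-dimensional faces (cardinality `d+1`) of `K`. -/
def dfaces (K : Set (Finset V)) (d : ℕ) : Set (Finset V) :=
  {F | F ∈ K ∧ F.card = d + 1}

/-- `K` is pure `d`-dimensional: every face is contained in a `d`-face. -/
def IsPureD (K : Set (Finset V)) (d : ℕ) : Prop :=
  ∀ F ∈ K, ∃ G ∈ dfaces K d, F ⊆ G

/-- The complex generated by a set of facets. -/
def gen (S : Set (Finset V)) : Set (Finset V) :=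
  {G | ∃ F ∈ S, G ⊆ F}

/-- The pure `d`-skeleton `K^{[d]}`: the complex whose facets are the `d`-faces of `K`. -/
def skel (K : Set (Finset V)) (d : ℕ) : Set (Finset V) :=
  gen (dfaces K d)

/-- The induced subcomplex `K_W` on a set `W` of vertices. -/
def induced (K : Set (Finset V)) (W : Set V) : Set (Finset V) :=
  {F | F ∈ K ∧ ↑F ⊆ W}

/-- Two `d`-faces of `S` are adjacent in a `d`-path if they share `d` vertices. -/
def adj (S : Set (Finset V)) (d : ℕ) (F G : Finset V) : Prop :=
  F ∈ S ∧ G ∈ S ∧ (F ∩ G).card = d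

/-- `d`-path-connectedness: any two `d`-faces are joined by a `d`-path. -/
def PathConn (K : Set (Finset V)) (d : ℕ) : Prop :=
  ∀ F ∈ dfaces K d, ∀ G ∈ dfaces K d, Relation.ReflTransGen (adj (dfaces K d) d) F G

/-- A `d`-dimensional cycle: a pure `d`-dimensional, `d`-path-connected complex in which
every `(d-1)`-face lies in an even number of `d`-faces. -/
def IsCycle (Ω : Set (Finset V)) (d : ℕ) : Prop :=
  IsComplex Ω ∧ IsPureD Ω d ∧ (dfaces Ω d).Nonempty ∧ PathConn Ω d ∧
    ∀ f ∈ Ω, Finset.card f = d → Even {F | F ∈ dfaces Ω d ∧ f ⊆ F}.ncard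

/-- A `d`-dimensional cycle in the complex `Γ`. -/
def CycleIn (Γ Ω : Set (Finset V)) (d : ℕ) : Prop :=
  Ω ⊆ Γ ∧ IsCycle Ω d

/-- Face-minimality: no strict subset of the `d`-faces of `Ω` forms a `d`-dimensional cycle. -/
def FaceMinimal (Ω : Set (Finset V)) (d : ℕ) : Prop :=
  ∀ S : Set (Finset V), S ⊂ dfaces Ω d → ¬ IsCycle (gen S) d

/-- Vertex-minimality of a cycle `Ω` in `Γ`: no `d`-dimensional cycle in `Γ` lies on a
strict subset of the vertices of `Ω`. -/
def VertexMinimal (Γ Ω : Set (Finset V)) (d : ℕ) : Prop :=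
  ∀ Ω', CycleIn Γ Ω' d → ¬ (verts Ω' ⊂ verts Ω)

/-- `d`-completeness: every `(d+1)`-subset of the vertex set is a face. -/
def DComplete (K : Set (Finset V)) (d : ℕ) : Prop :=
  ∀ S : Finset V, ↑S ⊆ verts K → S.card = d + 1 → S ∈ K

/-- A chord set `C` of the `d`-dimensional cycle `Ω` in `Γ`. -/
def ChordSet (Γ Ω : Set (Finset V)) (d : ℕ) (C : Set (Finset V)) : Prop :=
  C ⊆ dfaces Γ d ∧ (∀ F ∈ C, F ∉ Ω) ∧ (∀ F ∈ C, ↑F ⊆ verts Ω) ∧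
    ∃ (n : ℕ) (Ωi : Fin n → Set (Finset V)), 2 ≤ n ∧ (∀ i, IsCycle (Ωi i) d) ∧
      (⋃ i, dfaces (Ωi i) d) = dfaces Ω d ∪ C ∧
      (∀ F ∈ C, Even {i | F ∈ dfaces (Ωi i) d}.ncard) ∧
      (∀ F ∈ dfaces Ω d, Odd {i | F ∈ dfaces (Ωi i) d}.ncard) ∧
      (∀ i, (verts (Ωi i)).ncard < (verts Ω).ncard)

/-- `Γ` is `d`-chorded: every face-minimal `d`-dimensional cycle in `Γ` that is not
`d`-complete has a chord set in `Γ`. -/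
def DChorded (Γ : Set (Finset V)) (d : ℕ) : Prop :=
  ∀ Ω, CycleIn Γ Ω d → FaceMinimal Ω d → ¬ DComplete Ω d → ∃ C, ChordSet Γ Ω d C

/-- `Γ` is `d`-cycle-complete: every vertex-minimal `d`-dimensional cycle in `Γ` is
`d`-complete. -/
def DCycleComplete (Γ : Set (Finset V)) (d : ℕ) : Prop :=
  ∀ Ω, CycleIn Γ Ω d → VertexMinimal Γ Ω d → DComplete Ω d

/-- The `d`-closure `Δ_d(K)` of the complex `K`, relative to the vertex set `W`:
it contains the faces of `K`, all subsets of `W` of size at most `d`, and every subset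
`S` of `W` with `|S| > d+1` all of whose `(d+1)`-subsets are faces of `K`. -/
def closure (W : Set V) (K : Set (Finset V)) (d : ℕ) : Set (Finset V) :=
  K ∪ {S | ↑S ⊆ W ∧ S.card ≤ d} ∪
    {S | ↑S ⊆ W ∧ d + 1 < S.card ∧ ∀ T ⊆ S, T.card = d + 1 → T ∈ K}

/-- A `d`-dimensional tree: a pure `d`-dimensional complex with no `d`-dimensional cycles. -/
def IsTree (K : Set (Finset V)) (d : ℕ) : Prop :=
  IsComplex K ∧ IsPureD K d ∧ ∀ Ω, ¬ CycleIn K Ω d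

/-- The unsigned boundary map on chains (appropriate over rings of characteristic 2):
a face is sent to the sum of the faces obtained by deleting one vertex. -/
noncomputable def ubd {R : Type*} [AddCommMonoid R] (c : Finset V →₀ R) : Finset V →₀ R :=
  c.sum fun F a => F.sum fun v => Finsupp.single (F.erase v) a

/-- The signed (oriented) boundary map on chains, the vertices of each face being listed
in increasing order. -/
noncomputable def sbd [LinearOrder V] {R : Type*} [Ring R] (c : Finset V →₀ R) : Finset V →₀ R :=
  c.sum fun F a =>
    F.sum fun v => Finsupp.single (F.erase v) ((-1 : R) ^ (F.filter fun w => w < v).card * a)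

/-- `c` is an `i`-chain on the complex `K`: it is supported on `i`-faces of `K`. -/
def ChainOn {R : Type*} [Zero R] (K : Set (Finset V)) (i : ℕ) (c : Finset V →₀ R) : Prop :=
  ∀ F ∈ c.support, F ∈ K ∧ F.card = i + 1

/-- Vanishing of the reduced simplicial homology `H̃_i(K; R)` for the unsigned boundary
map (this is reduced simplicial homology when `R` has characteristic 2): every `i`-chain
with vanishing boundary (for `i = 0`, the boundary at the empty face is the augmentation ε)
is the boundary of an `(i+1)`-chain. -/
def RedHomZeroU (K : Set (Finset V)) (R : Type*) [AddCommMonoid R] (i : ℕ) : Prop :=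
  ∀ c : Finset V →₀ R, ChainOn K i c → ubd c = 0 →
    ∃ b : Finset V →₀ R, ChainOn K (i + 1) b ∧ ubd b = c

/-- Vanishing of the reduced simplicial homology `H̃_i(K; R)` (oriented chains). -/
def RedHomZeroS [LinearOrder V] (K : Set (Finset V)) (R : Type*) [Ring R] (i : ℕ) : Prop :=
  ∀ c : Finset V →₀ R, ChainOn K i c → sbd c = 0 →
    ∃ b : Finset V →₀ R, ChainOn K (i + 1) b ∧ sbd b = c

/-- Orientability of a `d`-dimensional cycle: there is a choice of signs on its `d`-faces
making the resulting ℤ-chain have zero (oriented) boundary. -/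
def Orientable [LinearOrder V] (Ω : Set (Finset V)) (d : ℕ) : Prop :=
  ∃ c : Finset V →₀ ℤ, ↑c.support = dfaces Ω d ∧
    (∀ F ∈ c.support, c F = 1 ∨ c F = -1) ∧ sbd c = 0

/-- Orientable-vertex-minimality of a cycle `Ω` in `Γ`: no orientable `d`-dimensional
cycle in `Γ` lies on a strict subset of the vertices of `Ω`. -/
def OrientVertexMinimal [LinearOrder V] (Γ Ω : Set (Finset V)) (d : ℕ) : Prop :=
  ∀ Ω', CycleIn Γ Ω' d → Orientable Ω' d → ¬ (verts Ω' ⊂ verts Ω)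

/-- `Γ` is orientably-`d`-cycle-complete: every orientably-vertex-minimal (orientable)
`d`-dimensional cycle in `Γ` is `d`-complete. -/
def OrientDCycleComplete [LinearOrder V] (Γ : Set (Finset V)) (d : ℕ) : Prop :=
  ∀ Ω, CycleIn Γ Ω d → Orientable Ω d → OrientVertexMinimal Γ Ω d → DComplete Ω d

/-- A minimal non-face of `K`: a subset of the vertex set that is not a face, all of whose
proper subsets are faces. -/
def MinNonFace (K : Set (Finset V)) (S : Finset V) : Prop :=
  ↑S ⊆ verts K ∧ S ∉ K ∧ ∀ T ⊂ S, T ∈ K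

/-! ### Auxiliary lemmas -/

section Aux

variable [LinearOrder V] {R : Type*} [CommRing R]

lemma sbd_single (F : Finset V) (a : R) :
    sbd (Finsupp.single F a) =
      F.sum fun v => Finsupp.single (F.erase v)
        ((-1 : R) ^ (F.filter fun w => w < v).card * a) := by
  unfold sbd
  rw [Finsupp.sum_single_index]
  simp

lemma sbd_zero : sbd (0 : Finset V →₀ R) = 0 := by
  unfold sbd
  simp

lemma sbd_add (c₁ c₂ : Finset V →₀ R) : sbd (c₁ + c₂) = sbd c₁ + sbd c₂ := by
  unfold sbd
  rw [Finsupp.sum_add_index']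
  · intro F
    simp
  · intro F a b
    simp [mul_add, Finsupp.single_add, Finset.sum_add_distrib]

lemma sbd_finset_sum {ι : Type*} (s : Finset ι) (f : ι → (Finset V →₀ R)) :
    sbd (∑ i ∈ s, f i) = ∑ i ∈ s, sbd (f i) := by
  classical
  induction s using Finset.induction with
  | empty => simp [sbd_zero]
  | insert _ _ h ih => rw [Finset.sum_insert h, sbd_add, ih, Finset.sum_insert h]

lemma sbd_sbd_single (S : Finset V) (a : R) : sbd (sbd (Finsupp.single S a)) = 0 := by
  classical
  rw [sbd_single, sbd_finset_sum]
  set g : V → V → (Finset V →₀ R) := fun v u =>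
    Finsupp.single ((S.erase v).erase u)
      ((-1 : R) ^ ((S.erase v).filter fun w => w < u).card *
        ((-1 : R) ^ (S.filter fun w => w < v).card * a)) with hg
  have hrw : (∑ v ∈ S, sbd (Finsupp.single (S.erase v)
      ((-1 : R) ^ (S.filter fun w => w < v).card * a))) = ∑ v ∈ S, ∑ u ∈ S.erase v, g v u := by
    refine Finset.sum_congr rfl fun v _ => ?_
    rw [sbd_single]
  rw [hrw]
  -- antisymmetry of g
  have key : ∀ u ∈ S, ∀ v ∈ S, u < v → g v u + g u v = 0 := by
    intro u hu v hv huv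
    have h1 : (S.erase v).erase u = (S.erase u).erase v := Finset.erase_right_comm
    have h2 : ((S.erase v).filter fun w => w < u) = S.filter fun w => w < u := by
      rw [Finset.filter_erase]
      exact Finset.erase_eq_of_notMem (by
        simp only [Finset.mem_filter, not_and]
        intro _
        exact not_lt.mpr huv.le)
    have h3 : ((S.erase u).filter fun w => w < v) = (S.filter fun w => w < v).erase u :=
      Finset.filter_erase (p := fun w => w < v) u S
    have hmem : u ∈ S.filter fun w => w < v := Finset.mem_filter.mpr ⟨hu, huv⟩
    have h4 : (S.filter fun w => w < v).card =
        ((S.filter fun w => w < v).erase u).card + 1 :=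
      (Finset.card_erase_add_one hmem).symm
    rw [hg]
    simp only
    rw [h1, h2, h3, h4, ← Finsupp.single_add]
    have : (-1 : R) ^ (S.filter fun w => w < u).card *
          ((-1 : R) ^ (((S.filter fun w => w < v).erase u).card + 1) * a) +
        (-1 : R) ^ (((S.filter fun w => w < v).erase u).card) *
          ((-1 : R) ^ (S.filter fun w => w < u).card * a) = 0 := by
      rw [pow_succ]
      ring
    rw [this, Finsupp.single_zero]
  have key' : ∀ u ∈ S, ∀ v ∈ S, u ≠ v → g v u + g u v = 0 := by
    intro u hu v hv hne
    rcases lt_or_gt_of_ne hne with h | h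
    · exact key u hu v hv h
    · rw [add_comm]
      exact key v hv u hu h
  -- convert double sum to offDiag sum
  have hconv : (∑ v ∈ S, ∑ u ∈ S.erase v, g v u) = ∑ p ∈ S.offDiag, g p.1 p.2 := by
    rw [show S.offDiag = (S ×ˢ S).filter (fun a : V × V => a.fst ≠ a.snd) from by ext; simp [and_assoc], Finset.sum_filter, Finset.sum_product]
    refine Finset.sum_congr rfl fun v hv => ?_
    rw [← Finset.sum_filter]
    congr 1
    ext u
    simp only [Finset.mem_filter, Finset.mem_erase]
    constructor
    · rintro ⟨h1, h2⟩
      exact ⟨h2, Ne.symm h1⟩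
    · rintro ⟨h1, h2⟩
      exact ⟨Ne.symm h2, h1⟩
  rw [hconv]
  refine Finset.sum_involution (fun p _ => (p.2, p.1)) ?_ ?_ ?_ ?_
  · intro p hp
    obtain ⟨h1, h2, h3⟩ := Finset.mem_offDiag.mp hp
    exact key' p.2 h2 p.1 h1 (Ne.symm h3)
  · intro p hp _
    obtain ⟨_, _, h3⟩ := Finset.mem_offDiag.mp hp
    intro heq
    exact h3 (congrArg Prod.fst heq).symm
  · intro p hp
    obtain ⟨h1, h2, h3⟩ := Finset.mem_offDiag.mp hp
    exact Finset.mem_offDiag.mpr ⟨h2, h1, Ne.symm h3⟩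
  · intro p hp
    rfl

end Aux

lemma eq_erase_of_subset_card (S T : Finset V) (hsub : T ⊆ S) (hc : T.card + 1 = S.card) :
    ∃ u ∈ S, u ∉ T ∧ T = S.erase u := by
  have h1 : (S \ T).card = 1 := by rw [Finset.card_sdiff_of_subset hsub]; omega
  obtain ⟨u, hu⟩ := Finset.card_eq_one.mp h1
  have humem : u ∈ S \ T := hu ▸ Finset.mem_singleton_self u
  obtain ⟨huS, huT⟩ := Finset.mem_sdiff.mp humem
  refine ⟨u, huS, huT, ?_⟩
  apply Finset.eq_of_subset_of_card_le
  · intro x hx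
    exact Finset.mem_erase.mpr ⟨fun h => huT (h ▸ hx), hsub hx⟩
  · rw [Finset.card_erase_of_mem huS]
    omega

section BndCycle

variable (S : Finset V) (d : ℕ)

/-- The boundary of the simplex on vertex set `S` (generated by the `(d+1)`-subsets of `S`). -/
def bnd : Set (Finset V) := gen {T : Finset V | T ⊆ S ∧ T.card = d + 1}

lemma dfaces_bnd : dfaces (bnd S d) d = {T : Finset V | T ⊆ S ∧ T.card = d + 1} := by
  ext T
  constructor
  · rintro ⟨⟨T', ⟨hT'S, hT'c⟩, hTT'⟩, hTc⟩
    have hTeq : T = T' := Finset.eq_of_subset_of_card_le hTT' (by omega)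
    subst hTeq
    exact ⟨hT'S, hT'c⟩
  · intro h
    exact ⟨⟨T, h, Finset.Subset.refl T⟩, h.2⟩

variable {S d}

lemma erase_mem_bndfaces (hScard : S.card = d + 2) : ∀ u ∈ S, S.erase u ∈ ({T : Finset V | T ⊆ S ∧ T.card = d + 1} :
    Set (Finset V)) := by
  intro u hu
  refine ⟨Finset.erase_subset _ _, ?_⟩
  rw [Finset.card_erase_of_mem hu, hScard]
  omega

lemma bndface_form (hScard : S.card = d + 2) : ∀ T ∈ ({T : Finset V | T ⊆ S ∧ T.card = d + 1} : Set (Finset V)),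
    ∃ u ∈ S, u ∉ T ∧ T = S.erase u := by
  rintro T ⟨hTS, hTc⟩
  exact eq_erase_of_subset_card S T hTS (by omega)

lemma verts_bnd (hScard : S.card = d + 2) : verts (bnd S d) = ↑S := by
  ext v
  constructor
  · rintro ⟨F, ⟨T, ⟨hTS, _⟩, hFT⟩, hvF⟩
    exact hTS (hFT hvF)
  · intro hv
    have hv' : v ∈ S := hv
    have hpos : 0 < (S.erase v).card := by
      rw [Finset.card_erase_of_mem hv', hScard]
      omega
    obtain ⟨w, hw⟩ := Finset.card_pos.mp hpos
    obtain ⟨hwv, hwS⟩ := Finset.mem_erase.mp hw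
    refine ⟨S.erase w, ⟨S.erase w, erase_mem_bndfaces hScard w hwS, Finset.Subset.refl _⟩, ?_⟩
    exact Finset.mem_erase.mpr ⟨Ne.symm hwv, hv'⟩

lemma isCycle_bnd (hScard : S.card = d + 2) : IsCycle (bnd S d) d := by
  refine ⟨?_, ?_, ?_, ?_, ?_⟩
  · rintro G ⟨T, hT, hGT⟩ H hHG
    exact ⟨T, hT, hHG.trans hGT⟩
  · rintro G ⟨T, hT, hGT⟩
    exact ⟨T, by rw [dfaces_bnd]; exact hT, hGT⟩
  · have hpos : 0 < S.card := by omega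
    obtain ⟨u, hu⟩ := Finset.card_pos.mp hpos
    exact ⟨S.erase u, by rw [dfaces_bnd]; exact erase_mem_bndfaces hScard u hu⟩
  · intro T hT T' hT'
    have hTm := hT; have hT'm := hT'
    rw [dfaces_bnd] at hTm hT'm
    obtain ⟨u, huS, huT, rfl⟩ := bndface_form hScard T hTm
    obtain ⟨w, hwS, hwT, rfl⟩ := bndface_form hScard _ hT'm
    by_cases huw : u = w
    · subst huw
      exact Relation.ReflTransGen.refl
    · refine Relation.ReflTransGen.single ⟨hT, hT', ?_⟩
      have hint : S.erase u ∩ S.erase w = (S.erase u).erase w := by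
        ext y
        simp only [Finset.mem_inter, Finset.mem_erase]
        tauto
      rw [hint, Finset.card_erase_of_mem
        (Finset.mem_erase.mpr ⟨Ne.symm huw, hwS⟩),
        Finset.card_erase_of_mem huS, hScard]
      omega
  · intro f hf hfc
    obtain ⟨T, ⟨hTS, hTc⟩, hfT⟩ := hf
    have hfS : f ⊆ S := hfT.trans hTS
    have hcd : (S \ f).card = 2 := by rw [Finset.card_sdiff_of_subset hfS]; omega
    obtain ⟨a, b, hab, hsd⟩ := Finset.card_eq_two.mp hcd
    have haS : a ∈ S ∧ a ∉ f := by
      have : a ∈ S \ f := by rw [hsd]; exact Finset.mem_insert_self a {b}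
      exact Finset.mem_sdiff.mp this
    have hbS : b ∈ S ∧ b ∉ f := by
      have : b ∈ S \ f := by rw [hsd]; exact Finset.mem_insert_of_mem (Finset.mem_singleton_self b)
      exact Finset.mem_sdiff.mp this
    have hset : {F | F ∈ dfaces (bnd S d) d ∧ f ⊆ F} = {insert a f, insert b f} := by
      ext G
      rw [dfaces_bnd]
      simp only [Set.mem_setOf_eq, Set.mem_insert_iff, Set.mem_singleton_iff]
      constructor
      · rintro ⟨⟨hGS, hGc⟩, hfG⟩
        have h1 : (G \ f).card = 1 := by rw [Finset.card_sdiff_of_subset hfG]; omega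
        obtain ⟨x, hx⟩ := Finset.card_eq_one.mp h1
        have hxm : x ∈ G \ f := hx ▸ Finset.mem_singleton_self x
        obtain ⟨hxG, hxf⟩ := Finset.mem_sdiff.mp hxm
        have hGeq : G = insert x f := by
          apply Finset.Subset.antisymm
          · intro y hy
            by_cases hyf : y ∈ f
            · exact Finset.mem_insert_of_mem hyf
            · have : y ∈ G \ f := Finset.mem_sdiff.mpr ⟨hy, hyf⟩
              rw [hx] at this
              rw [Finset.mem_singleton.mp this]
              exact Finset.mem_insert_self x f
          · intro y hy
            rcases Finset.mem_insert.mp hy with rfl | hyf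
            · exact hxG
            · exact hfG hyf
        have hxSf : x ∈ S \ f := Finset.mem_sdiff.mpr ⟨hGS hxG, hxf⟩
        rw [hsd] at hxSf
        rcases Finset.mem_insert.mp hxSf with rfl | h
        · left; exact hGeq
        · right; rw [Finset.mem_singleton.mp h] at hGeq; exact hGeq
      · rintro (rfl | rfl)
        · exact ⟨⟨Finset.insert_subset haS.1 hfS,
            by rw [Finset.card_insert_of_notMem haS.2, hfc]⟩, Finset.subset_insert _ _⟩
        · exact ⟨⟨Finset.insert_subset hbS.1 hfS,
            by rw [Finset.card_insert_of_notMem hbS.2, hfc]⟩, Finset.subset_insert _ _⟩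
    rw [hset]
    have hne : insert a f ≠ insert b f := by
      intro h
      have : a ∈ insert b f := h ▸ Finset.mem_insert_self a f
      rcases Finset.mem_insert.mp this with h' | h'
      · exact hab h'
      · exact haS.2 h'
    rw [Set.ncard_pair hne]
    exact even_two

variable [LinearOrder V]

lemma bnd_chain_apply (u : V) (hu : u ∈ S) :
    (sbd (Finsupp.single S (1 : ℤ))) (S.erase u) =
      (-1 : ℤ) ^ (S.filter fun w => w < u).card := by
  classical
  rw [sbd_single, Finsupp.finset_sum_apply]
  rw [Finset.sum_eq_single_of_mem u hu]
  · rw [Finsupp.single_eq_same, mul_one]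
  · intro v hv hne
    apply Finsupp.single_eq_of_ne'
    intro h
    have : u ∈ S.erase v := Finset.mem_erase.mpr ⟨Ne.symm hne, hu⟩
    rw [h] at this
    exact (Finset.mem_erase.mp this).1 rfl

lemma bnd_chain_zero (T : Finset V) (hT : ∀ v ∈ S, T ≠ S.erase v) :
    (sbd (Finsupp.single S (1 : ℤ))) T = 0 := by
  classical
  rw [sbd_single, Finsupp.finset_sum_apply]
  apply Finset.sum_eq_zero
  intro v hv
  exact Finsupp.single_eq_of_ne' (fun h => hT v hv h.symm)

lemma orientable_bnd (hScard : S.card = d + 2) : Orientable (bnd S d) d := by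
  classical
  refine ⟨sbd (Finsupp.single S (1 : ℤ)), ?_, ?_, sbd_sbd_single S 1⟩
  · rw [dfaces_bnd]
    ext T
    simp only [Finset.mem_coe, Finsupp.mem_support_iff, Set.mem_setOf_eq]
    constructor
    · intro hT
      by_cases hform : ∃ v ∈ S, T = S.erase v
      · obtain ⟨v, hv, rfl⟩ := hform
        refine ⟨Finset.erase_subset _ _, ?_⟩
        rw [Finset.card_erase_of_mem hv, hScard]
        omega
      · push_neg at hform
        exact absurd (bnd_chain_zero T hform) hT
    · rintro ⟨hTS, hTc⟩
      obtain ⟨u, huS, huT, rfl⟩ := eq_erase_of_subset_card S T hTS (by omega)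
      rw [bnd_chain_apply u huS]
      intro h
      have := pow_ne_zero (S.filter fun w => w < u).card (by norm_num : (-1 : ℤ) ≠ 0)
      exact this h
  · intro F hF
    rw [Finsupp.mem_support_iff] at hF
    by_cases hform : ∃ v ∈ S, F = S.erase v
    · obtain ⟨v, hv, rfl⟩ := hform
      rw [bnd_chain_apply v hv]
      rcases Nat.even_or_odd (S.filter fun w => w < v).card with he | ho
      · left; exact he.neg_one_pow
      · right; exact ho.neg_one_pow
    · push_neg at hform
      exact absurd (bnd_chain_zero F hform) hF

end BndCycle

/-- claim inside the proof of Theorem 6.1.1: if `Γ = Δ_d(Γ^{[d]})` and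
`Ω` is an orientably-vertex-minimal `d`-dimensional cycle in `Γ^{[d]}` that is not
`d`-complete, then the induced subcomplex `Γ_{V(Ω)}` has dimension `d`, i.e. contains no
face of cardinality greater than `d+1`. -/
theorem induced_on_cycle_dim_le {V : Type*} [DecidableEq V] [Fintype V]
    [LinearOrder V] (Γ : Set (Finset V)) (d : ℕ) (hcomplex : IsComplex Γ)
    (hcl : Γ = closure (verts Γ) (skel Γ d) d)
    (Ω : Set (Finset V)) (hΩ : CycleIn (skel Γ d) Ω d) (hor : Orientable Ω d)
    (hmin : OrientVertexMinimal (skel Γ d) Ω d) (hnc : ¬ DComplete Ω d) :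
    ∀ F ∈ induced Γ (verts Ω), F.card ≤ d + 1 := by
  rintro F ⟨hFΓ, hFW⟩
  by_contra hcard
  push_neg at hcard
  obtain ⟨S, hSF, hScard⟩ := Finset.exists_subset_card_eq (show d + 2 ≤ F.card by omega)
  -- the boundary of the simplex on S is an orientable d-cycle in skel Γ d
  have hsub : bnd S d ⊆ skel Γ d := by
    rintro G ⟨T, ⟨hTS, hTc⟩, hGT⟩
    exact ⟨T, ⟨hcomplex F hFΓ T (hTS.trans hSF), hTc⟩, hGT⟩
  have hcyc : IsCycle (bnd S d) d := isCycle_bnd hScard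
  have hor' : Orientable (bnd S d) d := orientable_bnd hScard
  have hSW : (↑S : Set V) ⊆ verts Ω := fun v hv => hFW (hSF hv)
  have hne := hmin (bnd S d) ⟨hsub, hcyc⟩ hor'
  rw [verts_bnd hScard] at hne
  have hveq : verts Ω = ↑S := by
    by_contra h
    exact hne ⟨hSW, fun hsup => h (Set.Subset.antisymm hsup hSW)⟩
  -- now Ω is d-complete, contradiction
  apply hnc
  obtain ⟨hΩsub, hΩcx, hΩpure, ⟨F₀, hF₀⟩, hΩconn, hΩeven⟩ := hΩ
  have hfaceS : ∀ G ∈ Ω, G ⊆ S := by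
    intro G hG x hx
    have hxv : x ∈ verts Ω := ⟨G, hG, hx⟩
    rw [hveq] at hxv
    exact hxv
  -- the key step: exchanging the missing vertex
  have hstep : ∀ u ∈ S, S.erase u ∈ dfaces Ω d →
      ∀ x ∈ S.erase u, S.erase x ∈ dfaces Ω d := by
    intro u hu hG x hx
    obtain ⟨hxu, hxS⟩ := Finset.mem_erase.mp hx
    have hfΩ : (S.erase u).erase x ∈ Ω := hΩcx _ hG.1 _ (Finset.erase_subset _ _)
    have hfc : ((S.erase u).erase x).card = d := by
      rw [Finset.card_erase_of_mem hx, Finset.card_erase_of_mem hu, hScard]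
      omega
    have heven := hΩeven _ hfΩ hfc
    by_contra hnot
    have hMeq : {G | G ∈ dfaces Ω d ∧ (S.erase u).erase x ⊆ G} = {S.erase u} := by
      ext G
      simp only [Set.mem_setOf_eq, Set.mem_singleton_iff]
      constructor
      · rintro ⟨hGd, hfG⟩
        have hGS : G ⊆ S := hfaceS G hGd.1
        have hGc : G.card = d + 1 := hGd.2
        obtain ⟨y, hyS, hyG, rfl⟩ := eq_erase_of_subset_card S G hGS (by omega)
        have hyf : y ∉ (S.erase u).erase x := fun hyf => hyG (hfG hyf)
        have hyux : y = x ∨ y = u := by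
          by_contra hcon
          push_neg at hcon
          exact hyf (Finset.mem_erase.mpr ⟨hcon.1, Finset.mem_erase.mpr ⟨hcon.2, hyS⟩⟩)
        rcases hyux with rfl | rfl
        · exact absurd hGd hnot
        · rfl
      · rintro rfl
        exact ⟨hG, Finset.erase_subset _ _⟩
    rw [hMeq] at heven
    rw [Set.ncard_singleton] at heven
    exact (Nat.not_even_iff_odd.mpr odd_one) heven
  -- conclude d-completeness
  intro T hTW hTc
  rw [hveq] at hTW
  have hTS : T ⊆ S := Finset.coe_subset.mp hTW
  obtain ⟨x, hxS, hxT, rfl⟩ := eq_erase_of_subset_card S T hTS (by omega)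
  have hF₀S : F₀ ⊆ S := hfaceS F₀ hF₀.1
  obtain ⟨u, huS, huF₀, hF₀eq⟩ := eq_erase_of_subset_card S F₀ hF₀S (by
    have := hF₀.2; omega)
  by_cases hxu : x = u
  · subst hxu
    rw [← hF₀eq]
    exact hF₀.1
  · have := hstep u huS (hF₀eq ▸ hF₀) x (Finset.mem_erase.mpr ⟨hxu, hxS⟩)
    exact this.1

end ChordedPaper
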